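/- arXiv:2010.03989 — 5 statements merged into one kernel-verified Lean document; each statement's English description precedes it below -/
import Mathlib

section
/- Every finitely generated commutative ring R that is elementarily equivalent to ℤ in the first-order language of rings is isomorphic to ℤ. -/
open FirstOrder Language Matrix

/-- The first-order language of groups: a binary function symbol (multiplication),
a unary function symbol (inversion), and a constant symbol (identity). -/
def grpLang : FirstOrder.Language :=
  ⟨fun n => match n with
    | 0 => Unit
    | 1 => Unit
    | 2 => Unit
    | _ => Empty,
   fun _ => Empty⟩

/-- The natural interpretation of the language of groups in a group. -/
def grpStructure (G : Type*) [Group G] : grpLang.Structure G where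
  funMap {n} f v :=
    match n, f, v with
    | 0, _, _ => 1
    | 1, _, v => (v 0)⁻¹
    | 2, _, v => v 0 * v 1
    | (_ + 3), f, _ => f.elim
  RelMap := fun {_} r => r.elim

/-- Two groups are elementarily equivalent in the first-order language of groups. -/
def GroupElemEquiv (G : Type*) (H : Type*) [Group G] [Group H] : Prop :=
  letI := grpStructure G
  letI := grpStructure H
  G ≅[grpLang] H

/-- Two rings are elementarily equivalent in the first-order language of rings. -/
def RingElemEquiv (R : Type*) (S : Type*) [Ring R] [Ring S] : Prop :=
  letI := FirstOrder.Ring.compatibleRingOfRing R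
  letI := FirstOrder.Ring.compatibleRingOfRing S
  R ≅[Language.ring] S

namespace IntRigidAux

open FirstOrder Language Ring BoundedFormula

/-- Terms in the language of rings with `n` de Bruijn variables. -/
abbrev T (n : ℕ) := Language.ring.Term (Empty ⊕ Fin n)

/-- sum of four squares of four de Bruijn variables -/
def s4v (n : ℕ) (i j k l : Fin n) : T n :=
  (&i) * (&i) + (&j) * (&j) + (&k) * (&k) + (&l) * (&l)

/-- nontriviality sentence -/
def phiNontriv : Language.ring.Sentence := ∼((0 : T 0) =' 1)

/-- no zero divisors -/
def phiDom : Language.ring.Sentence :=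
  ∀' ∀' ((((&0 : T 2) * (&1)) =' 0) ⟹ (((&0 : T 2) =' 0) ⊔ ((&1 : T 2) =' 0)))

/-- units are ±1 -/
def phiUnit : Language.ring.Sentence :=
  ∀' ∀' ((((&0 : T 2) * (&1)) =' 1) ⟹ (((&0 : T 2) =' 1) ⊔ ((&0 : T 2) =' (-1 : T 2))))

/-- every element is ± a sum of four squares -/
def phiTot : Language.ring.Sentence :=
  ∀' ((∃' ∃' ∃' ∃' ((&0 : T 5) =' s4v 5 1 2 3 4)) ⊔
      (∃' ∃' ∃' ∃' ((-(&0) : T 5) =' s4v 5 1 2 3 4)))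

/-- a sum of eight squares equal to zero has its first four squares summing to zero -/
def phiAnti : Language.ring.Sentence :=
  ∀' ∀' ∀' ∀' ∀' ∀' ∀' ∀' (((s4v 8 0 1 2 3 + s4v 8 4 5 6 7) =' 0) ⟹ (s4v 8 0 1 2 3 =' 0))

/-- sums of four squares are closed under addition -/
def phiAdd : Language.ring.Sentence :=
  ∀' ∀' ∀' ∀' ∀' ∀' ∀' ∀' ∃' ∃' ∃' ∃'
    ((s4v 12 0 1 2 3 + s4v 12 4 5 6 7) =' s4v 12 8 9 10 11)

/-- sums of four squares are closed under multiplication -/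
def phiMul : Language.ring.Sentence :=
  ∀' ∀' ∀' ∀' ∀' ∀' ∀' ∀' ∃' ∃' ∃' ∃'
    ((s4v 12 0 1 2 3 * s4v 12 4 5 6 7) =' s4v 12 8 9 10 11)

/-- discreteness: a sum of four squares is 0 or 1 + a sum of four squares -/
def phiDisc : Language.ring.Sentence :=
  ∀' ∀' ∀' ∀' ((s4v 4 0 1 2 3 =' 0) ⊔
    ∃' ∃' ∃' ∃' (s4v 8 0 1 2 3 =' (1 + s4v 8 4 5 6 7)))

/-- Bézout: every pair has a gcd that is a linear combination -/
def phiBez : Language.ring.Sentence :=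
  ∀' ∀' ∃' ∃' ∃' ∃'
    ((((&0 : T 6) =' (((&0 : T 6) * (&2) + (&1) * (&3)) * (&4)))) ⊓
     (((&1 : T 6) =' (((&0 : T 6) * (&2) + (&1) * (&3)) * (&5)))))

section Realize

variable {K : Type*} [CommRing K] [FirstOrder.Ring.CompatibleRing K]

theorem realize_phiNontriv : (K ⊨ phiNontriv) ↔ ¬((0 : K) = 1) := by
  simp (config := { decide := true }) [phiNontriv, Sentence.Realize, Formula.Realize, Fin.snoc]

theorem realize_phiDom : (K ⊨ phiDom) ↔ ∀ x y : K, x * y = 0 → x = 0 ∨ y = 0 := by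
  simp (config := { decide := true }) [phiDom, Sentence.Realize, Formula.Realize, Fin.snoc]

theorem realize_phiUnit : (K ⊨ phiUnit) ↔ ∀ x y : K, x * y = 1 → x = 1 ∨ x = -1 := by
  simp (config := { decide := true }) [phiUnit, Sentence.Realize, Formula.Realize, Fin.snoc]

theorem realize_phiTot : (K ⊨ phiTot) ↔ ∀ x : K,
    (∃ a b c d : K, x = a*a + b*b + c*c + d*d) ∨
    (∃ a b c d : K, -x = a*a + b*b + c*c + d*d) := by
  simp (config := { decide := true }) [phiTot, s4v, Sentence.Realize, Formula.Realize, Fin.snoc]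

theorem realize_phiAnti : (K ⊨ phiAnti) ↔ ∀ a b c d e f g h : K,
    (a*a + b*b + c*c + d*d) + (e*e + f*f + g*g + h*h) = 0 →
    a*a + b*b + c*c + d*d = 0 := by
  simp (config := { decide := true }) [phiAnti, s4v, Sentence.Realize, Formula.Realize, Fin.snoc]

theorem realize_phiAdd : (K ⊨ phiAdd) ↔ ∀ a b c d e f g h : K,
    ∃ x y z w : K, (a*a + b*b + c*c + d*d) + (e*e + f*f + g*g + h*h)
      = x*x + y*y + z*z + w*w := by
  simp (config := { decide := true }) [phiAdd, s4v, Sentence.Realize, Formula.Realize, Fin.snoc]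

theorem realize_phiMul : (K ⊨ phiMul) ↔ ∀ a b c d e f g h : K,
    ∃ x y z w : K, (a*a + b*b + c*c + d*d) * (e*e + f*f + g*g + h*h)
      = x*x + y*y + z*z + w*w := by
  simp (config := { decide := true }) [phiMul, s4v, Sentence.Realize, Formula.Realize, Fin.snoc]

theorem realize_phiDisc : (K ⊨ phiDisc) ↔ ∀ a b c d : K,
    (a*a + b*b + c*c + d*d = 0) ∨
    ∃ x y z w : K, a*a + b*b + c*c + d*d = 1 + (x*x + y*y + z*z + w*w) := by
  simp (config := { decide := true }) [phiDisc, s4v, Sentence.Realize, Formula.Realize, Fin.snoc]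

theorem realize_phiBez : (K ⊨ phiBez) ↔ ∀ x y : K,
    ∃ u v w z : K, x = (x*u + y*v) * w ∧ y = (x*u + y*v) * z := by
  simp (config := { decide := true }) [phiBez, Sentence.Realize, Formula.Realize, Fin.snoc]

end Realize

section IntFacts

/-- Lagrange's four square theorem for nonnegative integers. -/
theorem int_lagrange (x : ℤ) (hx : 0 ≤ x) : ∃ a b c d : ℤ, x = a*a + b*b + c*c + d*d := by
  obtain ⟨a, b, c, d, habcd⟩ := Nat.sum_four_squares x.toNat
  refine ⟨a, b, c, d, ?_⟩
  have := congrArg (fun n : ℕ => (n : ℤ)) habcd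
  rw [← Int.toNat_of_nonneg hx]
  push_cast at this ⊢
  nlinarith [this]

theorem int_phiTot : ∀ x : ℤ,
    (∃ a b c d : ℤ, x = a*a + b*b + c*c + d*d) ∨
    (∃ a b c d : ℤ, -x = a*a + b*b + c*c + d*d) := by
  intro x
  rcases le_or_gt 0 x with hx | hx
  · exact Or.inl (int_lagrange x hx)
  · exact Or.inr (int_lagrange (-x) (by omega))

theorem int_phiAnti : ∀ a b c d e f g h : ℤ,
    (a*a + b*b + c*c + d*d) + (e*e + f*f + g*g + h*h) = 0 →
    a*a + b*b + c*c + d*d = 0 := by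
  intro a b c d e f g h heq
  nlinarith [mul_self_nonneg a, mul_self_nonneg b, mul_self_nonneg c, mul_self_nonneg d,
    mul_self_nonneg e, mul_self_nonneg f, mul_self_nonneg g, mul_self_nonneg h]

theorem int_phiAdd : ∀ a b c d e f g h : ℤ,
    ∃ x y z w : ℤ, (a*a + b*b + c*c + d*d) + (e*e + f*f + g*g + h*h)
      = x*x + y*y + z*z + w*w := by
  intro a b c d e f g h
  exact int_lagrange _ (by nlinarith [mul_self_nonneg a, mul_self_nonneg b, mul_self_nonneg c, mul_self_nonneg d, mul_self_nonneg e, mul_self_nonneg f, mul_self_nonneg g, mul_self_nonneg h])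

theorem int_phiMul : ∀ a b c d e f g h : ℤ,
    ∃ x y z w : ℤ, (a*a + b*b + c*c + d*d) * (e*e + f*f + g*g + h*h)
      = x*x + y*y + z*z + w*w := by
  intro a b c d e f g h
  exact int_lagrange _ (by nlinarith [mul_self_nonneg a, mul_self_nonneg b, mul_self_nonneg c, mul_self_nonneg d, mul_self_nonneg e, mul_self_nonneg f, mul_self_nonneg g, mul_self_nonneg h])

theorem int_phiDisc : ∀ a b c d : ℤ,
    (a*a + b*b + c*c + d*d = 0) ∨
    ∃ x y z w : ℤ, a*a + b*b + c*c + d*d = 1 + (x*x + y*y + z*z + w*w) := by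
  intro a b c d
  rcases eq_or_lt_of_le (by nlinarith [mul_self_nonneg a, mul_self_nonneg b, mul_self_nonneg c, mul_self_nonneg d] : (0:ℤ) ≤ a*a + b*b + c*c + d*d) with heq | hlt
  · exact Or.inl heq.symm
  · right
    obtain ⟨x, y, z, w, hxyzw⟩ := int_lagrange (a*a + b*b + c*c + d*d - 1) (by omega)
    exact ⟨x, y, z, w, by omega⟩

theorem int_phiBez : ∀ x y : ℤ,
    ∃ u v w z : ℤ, x = (x*u + y*v) * w ∧ y = (x*u + y*v) * z := by
  intro x y
  by_cases h0 : x = 0 ∧ y = 0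
  · exact ⟨0, 0, 0, 0, by simp [h0.1, h0.2]⟩
  · have hg : (Int.gcd x y : ℤ) ≠ 0 := by
      simp only [ne_eq, Int.natCast_eq_zero, Int.gcd_eq_zero_iff]
      tauto
    obtain ⟨w, hw⟩ := Int.gcd_dvd_left (a := x) (b := y)
    obtain ⟨z, hz⟩ := Int.gcd_dvd_right (a := x) (b := y)
    refine ⟨Int.gcdA x y, Int.gcdB x y, w, z, ?_, ?_⟩
    · rw [← Int.gcd_eq_gcd_ab]; exact hw
    · rw [← Int.gcd_eq_gcd_ab]; exact hz

end IntFacts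

/-- ℤ is a Jacobson ring. -/
instance : IsJacobsonRing ℤ := by
  rw [isJacobsonRing_iff_prime_eq]
  intro P hP
  by_cases hbot : P = ⊥
  · subst hbot
    refine le_antisymm (fun x hx => ?_) Ideal.le_jacobson
    have hx' := Ideal.mem_jacobson_bot.mp hx x
    have hx0 : x = 0 := by
      rcases Int.isUnit_iff.mp hx' with h | h <;> nlinarith [mul_self_nonneg x]
    rw [Ideal.mem_bot]
    exact hx0
  · haveI := hP
    haveI : P.IsMaximal := IsPrime.to_maximal_ideal hbot
    exact Ideal.jacobson_eq_self_of_isMaximal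

/-- In a field that is integral over ℤ, some nonzero integer is zero. -/
theorem exists_int_cast_eq_zero (F : Type*) [Field F] [Algebra.IsIntegral ℤ F] :
    ∃ k : ℤ, k ≠ 0 ∧ (k : F) = 0 := by
  by_cases h2 : (2 : F) = 0
  · exact ⟨2, by norm_num, by exact_mod_cast h2⟩
  obtain ⟨p, pmonic, hp⟩ := Algebra.IsIntegral.isIntegral (R := ℤ) ((2:F)⁻¹)
  rw [Polynomial.eval₂_eq_sum_range] at hp
  set n := p.natDegree with hn
  refine ⟨∑ i ∈ Finset.range (n+1), p.coeff i * 2^(n-i), ?_, ?_⟩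
  · rw [Finset.sum_range_succ]
    have hlast : p.coeff n * (2:ℤ)^(n-n) = 1 := by
      simp [pmonic.coeff_natDegree, ← hn]; exact pmonic.coeff_natDegree
    rw [hlast]
    intro hzero
    have hdvd : (2:ℤ) ∣ ∑ i ∈ Finset.range n, p.coeff i * 2^(n-i) :=
      Finset.dvd_sum (fun i hi => dvd_mul_of_dvd_right
        (dvd_pow_self 2 (Nat.sub_ne_zero_of_lt (Finset.mem_range.mp hi))) _)
    obtain ⟨c, hc⟩ := hdvd
    omega
  · have hx : (2:F) * (2:F)⁻¹ = 1 := mul_inv_cancel₀ h2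
    have key : ∀ i ∈ Finset.range (n+1),
        ((p.coeff i : ℤ) : F) * 2^(n-i)
          = 2^n * ((algebraMap ℤ F) (p.coeff i) * ((2:F)⁻¹)^i) := by
      intro i hi
      have hi' : i ≤ n := Nat.lt_succ_iff.mp (Finset.mem_range.mp hi)
      have h2n : (2:F)^n * ((2:F)⁻¹)^i = 2^(n-i) := by
        rw [pow_sub₀ (2:F) h2 hi', inv_pow]
      simp only [algebraMap_int_eq, eq_intCast]
      rw [← h2n]; ring
    push_cast
    rw [Finset.sum_congr rfl key, ← Finset.mul_sum, hp, mul_zero]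

/-- The main algebraic lemma: a finitely generated commutative ring with the
transferred first-order properties of ℤ is isomorphic to ℤ. -/
theorem aux (R : Type*) [CommRing R]
    (hfg : ∃ s : Finset R, Subring.closure (s : Set R) = ⊤)
    (P : R → Prop)
    (hPdef : ∀ x, P x ↔ ∃ a b c d : R, x = a*a + b*b + c*c + d*d)
    (htot : ∀ x : R, P x ∨ P (-x))
    (hanti : ∀ x y : R, P x → P y → x + y = 0 → x = 0)
    (hadd : ∀ x y : R, P x → P y → P (x + y))
    (hmul : ∀ x y : R, P x → P y → P (x * y))
    (hdisc : ∀ x : R, P x → x = 0 ∨ P (x - 1))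
    (hunit : ∀ x y : R, x * y = 1 → x = 1 ∨ x = -1)
    (hbez : ∀ x y : R, ∃ u v w z : R, x = (x*u + y*v) * w ∧ y = (x*u + y*v) * z)
    (hdom : ∀ x y : R, x * y = 0 → x = 0 ∨ y = 0)
    (hnt : (0 : R) ≠ 1) :
    Nonempty (R ≃+* ℤ) := by
  classical
  have hP0 : P 0 := (hPdef 0).mpr ⟨0, 0, 0, 0, by ring⟩
  have hP1 : P 1 := (hPdef 1).mpr ⟨1, 0, 0, 0, by ring⟩
  haveI : Nontrivial R := ⟨⟨0, 1, hnt⟩⟩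
  haveI : NoZeroDivisors R := ⟨fun {a b} hab => hdom a b hab⟩
  haveI : IsDomain R := NoZeroDivisors.to_isDomain R
  -- P holds for all naturals
  have hPnat : ∀ n : ℕ, P ((n : ℕ) : R) := by
    intro n
    induction n with
    | zero => simpa using hP0
    | succ k ih =>
      have : (((k+1 : ℕ)) : R) = (k : R) + 1 := by push_cast; ring
      rw [this]
      exact hadd _ _ ih hP1
  -- bounded elements are natural numbers
  have key : ∀ (n : ℕ) (x : R), P x → P ((n : R) - x) → ∃ m : ℕ, x = (m : R) := by
    intro n
    induction n with
    | zero =>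
      intro x hx hnx
      refine ⟨0, ?_⟩
      have h0 : x = 0 := hanti x (((0:ℕ) : R) - x) hx hnx (by push_cast; ring)
      simp [h0]
    | succ k ih =>
      intro x hx hsx
      rcases hdisc x hx with h0 | h1
      · exact ⟨0, by simp [h0]⟩
      · have hre : ((k : R) - (x - 1)) = (((k+1:ℕ)) : R) - x := by push_cast; ring
        obtain ⟨m, hm⟩ := ih (x - 1) h1 (by rw [hre]; exact hsx)
        refine ⟨m + 1, ?_⟩
        have : x = (m : R) + 1 := by linear_combination hm
        rw [this]; push_cast; ring
  -- characteristic zero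
  haveI : CharZero R := by
    apply charZero_of_inj_zero
    intro n hn
    cases n with
    | zero => rfl
    | succ k =>
      exfalso
      have h1 : (1 : R) + (k : R) = 0 := by push_cast at hn; linear_combination hn
      exact hnt (hanti 1 (k : R) hP1 (hPnat k) h1).symm
  -- units are ±1
  have hu : ∀ u : R, IsUnit u → u = 1 ∨ u = -1 := by
    intro u hu'
    obtain ⟨v, hv⟩ := hu'.exists_right_inv
    exact hunit u v hv
  -- finite type
  have hft : Algebra.FiniteType ℤ R := by
    obtain ⟨s, hs⟩ := hfg
    refine ⟨⟨s, ?_⟩⟩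
    rw [Algebra.adjoin_int, hs]
    ext x
    simp [Algebra.mem_top]
  haveI := hft
  haveI : IsNoetherianRing R := Algebra.FiniteType.isNoetherianRing ℤ R
  -- Bezout
  haveI : IsBezout R := by
    rw [IsBezout.iff_span_pair_isPrincipal]
    intro x y
    obtain ⟨u, v, w, z, hx, hy⟩ := hbez x y
    refine ⟨⟨x*u + y*v, ?_⟩⟩
    apply le_antisymm
    · rw [Ideal.span_le]
      rintro t ht
      rcases ht with rfl | ht
      · exact Ideal.mem_span_singleton.mpr ⟨w, hx⟩
      · rcases Set.mem_singleton_iff.mp ht with rfl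
        exact Ideal.mem_span_singleton.mpr ⟨z, hy⟩
    · have heq : u * x + v * y = x*u + y*v := by ring
      have hmem := Ideal.mem_span_pair.mpr ⟨u, v, heq⟩
      rw [Submodule.span_le, Set.singleton_subset_iff]
      exact hmem
  haveI : IsPrincipalIdealRing R :=
    ((IsBezout.TFAE (R := R)).out 0 1 rfl rfl).mp inferInstance
  -- natural primes are irreducible in R
  have hirr : ∀ p : ℕ, p.Prime → Irreducible ((p : ℕ) : R) := by
    intro p hp
    have hpR0 : ((p : ℕ) : R) ≠ 0 := Nat.cast_ne_zero.mpr hp.ne_zero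
    constructor
    · intro hup
      rcases hu _ hup with h1 | h2
      · have : (p : ℕ) = 1 := Nat.cast_injective (by rw [h1, Nat.cast_one])
        exact hp.one_lt.ne' this
      · have hpp : (((p+1 : ℕ)) : R) = 0 := by push_cast; rw [h2]; ring
        have : p + 1 = 0 := Nat.cast_eq_zero.mp hpp
        omega
    · intro a b hab
      have main : ∀ a b : R, P a → P b → ((p:ℕ) : R) = a * b → IsUnit a ∨ IsUnit b := by
        intro a b hPa hPb hab
        rcases hdisc b hPb with hb0 | hb1
        · exact absurd (by rw [hab, hb0, mul_zero]) hpR0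
        · have hPd : P (((p:ℕ) : R) - a) := by
            rw [show (((p:ℕ) : R) - a) = a * (b - 1) by rw [hab]; ring]
            exact hmul a (b-1) hPa hb1
          obtain ⟨m, hm⟩ := key p a hPa hPd
          by_cases hpm : p ∣ m
          · right
            obtain ⟨k, hk⟩ := hpm
            have hkR : ((m:ℕ) : R) = ((p:ℕ) : R) * ((k:ℕ) : R) := by
              exact_mod_cast congrArg (fun t : ℕ => ((t : ℕ) : R)) hk
            have hcan : ((p:ℕ) : R) * 1 = ((p:ℕ) : R) * ((k : R) * b) := by
              linear_combination hab + b * hm + b * hkR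
            have h1 : (1 : R) = (k : R) * b := mul_left_cancel₀ hpR0 hcan
            exact IsUnit.of_mul_eq_one (a := b) (k : R) (by linear_combination h1.symm)
          · left
            have hgd : Nat.gcd m p = 1 := by
              rcases hp.eq_one_or_self_of_dvd _ (Nat.gcd_dvd_right m p) with h | h
              · exact h
              · exact absurd (h ▸ Nat.gcd_dvd_left m p) hpm
            have hb' := Int.gcd_eq_gcd_ab (m : ℤ) (p : ℤ)
            have hg' : Int.gcd (m : ℤ) (p : ℤ) = 1 := by
              rw [Int.gcd_natCast_natCast]; exact hgd
            rw [hg'] at hb'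
            set u : ℤ := Int.gcdA (m : ℤ) (p : ℤ) with hu_def
            set v : ℤ := Int.gcdB (m : ℤ) (p : ℤ) with hv_def
            have h1 : (1 : R) = a * ((u : ℤ) : R) + ((p:ℕ) : R) * ((v : ℤ) : R) := by
              have hcast : ((1 : ℤ) : R) = (((m : ℤ) * u + (p : ℤ) * v : ℤ) : R) := by
                rw [← hb']; norm_num
              push_cast at hcast
              rw [hm]
              linear_combination hcast
            have hbp : b = ((p:ℕ) : R) * (((u : ℤ) : R) + b * ((v : ℤ) : R)) := by
              linear_combination b * h1 - ((u : ℤ) : R) * hab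
            have hcan : ((p:ℕ) : R) * 1 = ((p:ℕ) : R) * (a * (((u : ℤ) : R) + b * ((v : ℤ) : R))) := by
              linear_combination hab + a * hbp
            have := mul_left_cancel₀ hpR0 hcan
            exact IsUnit.of_mul_eq_one (a := a) _ this.symm
      rcases htot a with ha | ha <;> rcases htot b with hb' | hb'
      · exact main a b ha hb' hab
      · exfalso
        have h0 : ((p:ℕ) : R) = 0 :=
          hanti _ (a * (-b)) (hPnat p) (hmul _ _ ha hb') (by rw [hab]; ring)
        exact hpR0 h0
      · exfalso
        have h0 : ((p:ℕ) : R) = 0 :=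
          hanti _ ((-a) * b) (hPnat p) (hmul _ _ ha hb') (by rw [hab]; ring)
        exact hpR0 h0
      · rcases main (-a) (-b) ha hb' (by rw [hab]; ring) with h | h
        · exact Or.inl ((IsUnit.neg_iff a).mp h)
        · exact Or.inr ((IsUnit.neg_iff b).mp h)
  -- every prime element of R is (the cast of) an integer
  have hqint : ∀ q : R, Prime q → ∃ n : ℤ, q = (n : R) := by
    intro q hq
    set I : Ideal R := Ideal.span {q} with hI
    haveI : I.IsMaximal := PrincipalIdealRing.isMaximal_of_irreducible hq.irreducible
    letI : Field (R ⧸ I) := Ideal.Quotient.field I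
    haveI : Algebra.FiniteType ℤ (R ⧸ I) :=
      Algebra.FiniteType.of_surjective (Ideal.Quotient.mkₐ ℤ I)
        (Ideal.Quotient.mkₐ_surjective ℤ I)
    haveI : Module.Finite ℤ (R ⧸ I) := finite_of_finite_type_of_isJacobsonRing ℤ (R ⧸ I)
    haveI : Algebra.IsIntegral ℤ (R ⧸ I) := Algebra.IsIntegral.of_finite ℤ (R ⧸ I)
    obtain ⟨k, hk0, hkF⟩ := exists_int_cast_eq_zero (R ⧸ I)
    have hdvd : q ∣ ((k : ℤ) : R) := by
      rw [← Ideal.mem_span_singleton, ← hI]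
      have hcast : ((k : ℤ) : (R ⧸ I)) = Ideal.Quotient.mk I ((k : ℤ) : R) :=
        (map_intCast (Ideal.Quotient.mk I) k).symm
      rw [hcast] at hkF
      exact Ideal.Quotient.eq_zero_iff_mem.mp hkF
    -- reduce to natural numbers and recurse on prime factors
    have hnat : ∀ j : ℕ, j ≠ 0 → q ∣ ((j : ℕ) : R) → ∃ n : ℤ, q = (n : R) := by
      intro j
      induction j using Nat.strong_induction_on with
      | _ j ih =>
        intro hj0 hjdvd
        by_cases hj1 : j = 1
        · subst hj1
          exact absurd (isUnit_of_dvd_one (by simpa using hjdvd)) hq.not_unit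
        · have hpj := Nat.minFac_prime hj1
          obtain ⟨c, hc⟩ := Nat.minFac_dvd j
          have hcast : ((j : ℕ) : R) = ((j.minFac : ℕ) : R) * ((c : ℕ) : R) := by
            conv_lhs => rw [hc]
            push_cast; ring
          rw [hcast] at hjdvd
          rcases hq.2.2 _ _ hjdvd with hqd | hqd
          · obtain ⟨d, hd⟩ := hqd
            rcases (hirr _ hpj).isUnit_or_isUnit hd with hqu | hdu
            · exact absurd hqu hq.not_unit
            · rcases hu d hdu with rfl | rfl
              · exact ⟨(j.minFac : ℤ), by push_cast; linear_combination -hd⟩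
              · exact ⟨-(j.minFac : ℤ), by push_cast; linear_combination hd⟩
          · have hc0 : c ≠ 0 := by
              rintro rfl
              rw [Nat.mul_zero] at hc
              exact hj0 hc
            have h2le : 2 ≤ j.minFac := hpj.two_le
            have h2c : 2 * c ≤ j := by rw [hc]; exact Nat.mul_le_mul_right c h2le
            have hclt : c < j := by omega
            exact ih c hclt hc0 hqd
    have hk' : q ∣ ((k.natAbs : ℕ) : R) := by
      rcases Int.natAbs_eq k with he | he
      · rw [he, Int.cast_natCast] at hdvd; exact hdvd
      · rw [he, Int.cast_neg, Int.cast_natCast] at hdvd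
        exact (dvd_neg.mp hdvd)
    exact hnat k.natAbs (Int.natAbs_ne_zero.mpr hk0) hk'
  -- surjectivity of the canonical map ℤ → R
  have hsurj : Function.Surjective (fun n : ℤ => (n : R)) := by
    intro x
    induction x using UniqueFactorizationMonoid.induction_on_prime with
    | h₁ => exact ⟨0, by simp⟩
    | h₂ x hx =>
      rcases hu x hx with rfl | rfl
      · exact ⟨1, by simp⟩
      · exact ⟨-1, by simp⟩
    | h₃ a p ha hp iha =>
      obtain ⟨n, hn⟩ := hqint p hp
      obtain ⟨m, hm⟩ := iha
      exact ⟨n * m, by rw [hn, ← hm]; push_cast; ring⟩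
  have hinj : Function.Injective (fun n : ℤ => (n : R)) := fun a b hab =>
    Int.cast_injective hab
  exact ⟨(RingEquiv.ofBijective (Int.castRingHom R) ⟨hinj, hsurj⟩).symm⟩

end IntRigidAux

/-- **Elementary rigidity of `ℤ` among finitely generated commutative rings.**
Every finitely generated commutative ring elementarily equivalent to `ℤ` in the
first-order language of rings is isomorphic to `ℤ`. -/
theorem int_elementary_rigidity
    (R : Type*) [CommRing R]
    (hfg : ∃ s : Finset R, Subring.closure (s : Set R) = ⊤)
    (h : RingElemEquiv R ℤ) :
    Nonempty (R ≃+* ℤ) := by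
  classical
  letI := FirstOrder.Ring.compatibleRingOfRing R
  letI := FirstOrder.Ring.compatibleRingOfRing ℤ
  have h' : R ≅[Language.ring] ℤ := h
  open IntRigidAux in
  -- transfer each sentence
  have tNontriv : ¬((0 : R) = 1) :=
    realize_phiNontriv.mp ((h'.realize_sentence phiNontriv).mpr (realize_phiNontriv.mpr (by norm_num)))
  have tDom : ∀ x y : R, x * y = 0 → x = 0 ∨ y = 0 :=
    realize_phiDom.mp ((h'.realize_sentence phiDom).mpr (realize_phiDom.mpr
      (fun x y hxy => mul_eq_zero.mp hxy)))
  have tUnit : ∀ x y : R, x * y = 1 → x = 1 ∨ x = -1 :=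
    realize_phiUnit.mp ((h'.realize_sentence phiUnit).mpr (realize_phiUnit.mpr
      (fun x y hxy => Int.isUnit_iff.mp (IsUnit.of_mul_eq_one (a := x) y hxy))))
  have tTot := realize_phiTot.mp ((h'.realize_sentence phiTot).mpr (realize_phiTot.mpr int_phiTot))
  have tAnti := realize_phiAnti.mp
    ((h'.realize_sentence phiAnti).mpr (realize_phiAnti.mpr int_phiAnti))
  have tAdd := realize_phiAdd.mp ((h'.realize_sentence phiAdd).mpr (realize_phiAdd.mpr int_phiAdd))
  have tMul := realize_phiMul.mp ((h'.realize_sentence phiMul).mpr (realize_phiMul.mpr int_phiMul))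
  have tDisc := realize_phiDisc.mp
    ((h'.realize_sentence phiDisc).mpr (realize_phiDisc.mpr int_phiDisc))
  have tBez := realize_phiBez.mp ((h'.realize_sentence phiBez).mpr (realize_phiBez.mpr int_phiBez))
  -- the positivity predicate
  set P : R → Prop := fun x => ∃ a b c d : R, x = a*a + b*b + c*c + d*d with hP
  have hPdef : ∀ x, P x ↔ ∃ a b c d : R, x = a*a + b*b + c*c + d*d := fun x => Iff.rfl
  refine IntRigidAux.aux R hfg P hPdef ?_ ?_ ?_ ?_ ?_ tUnit tBez tDom (fun h0 => tNontriv h0)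
  · exact tTot
  · rintro x y ⟨a, b, c, d, hx⟩ ⟨e, f, g, h0, hy⟩ hxy
    have := tAnti a b c d e f g h0 (by rw [← hx, ← hy]; exact hxy)
    rw [hx]; exact this
  · rintro x y ⟨a, b, c, d, hx⟩ ⟨e, f, g, h0, hy⟩
    obtain ⟨p, q, r, s, hpqrs⟩ := tAdd a b c d e f g h0
    exact ⟨p, q, r, s, by rw [hx, hy]; exact hpqrs⟩
  · rintro x y ⟨a, b, c, d, hx⟩ ⟨e, f, g, h0, hy⟩
    obtain ⟨p, q, r, s, hpqrs⟩ := tMul a b c d e f g h0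
    exact ⟨p, q, r, s, by rw [hx, hy]; exact hpqrs⟩
  · rintro x ⟨a, b, c, d, hx⟩
    rcases tDisc a b c d with h0 | ⟨p, q, r, s, hs⟩
    · exact Or.inl (by rw [hx]; exact h0)
    · refine Or.inr ⟨p, q, r, s, ?_⟩
      rw [hx]
      linear_combination hs
end

section
/- Let L be a first-order language and let H₁ and H₂ be L-structures. Then H₁ and H₂ are logically equivalent (for every n and every set T of L-formulas in free variables x₁,…,xₙ, the logical radicals satisfy T^{LL}_{H₁} = T^{LL}_{H₂}) if and only if H₁ and H₂ are isotypic. -/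
open FirstOrder Language

/-- The type of a tuple `a : Fin n → M` in an `L`-structure `M`: the set of all
first-order `L`-formulas in the free variables `x₁, …, xₙ` satisfied by `a` in `M`. -/
def typeOfTuple (L : FirstOrder.Language) {M : Type*} [L.Structure M] {n : ℕ}
    (a : Fin n → M) : Set (L.Formula (Fin n)) :=
  {φ | φ.Realize a}

/-- Two `L`-structures are isotypic if every tuple in either of them has a tuple in the
other realizing exactly the same type. -/
def Isotypic (L : FirstOrder.Language) (M N : Type*) [L.Structure M] [L.Structure N] :
    Prop :=
  ∀ n : ℕ,
    (∀ a : Fin n → M, ∃ b : Fin n → N, typeOfTuple L a = typeOfTuple L b) ∧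
    (∀ b : Fin n → N, ∃ a : Fin n → M, typeOfTuple L a = typeOfTuple L b)

/-- The logical radical `T^{LL}_H` of a set `T` of `L`-formulas in the free variables
`x₁, …, xₙ` with respect to an `L`-structure `H`: the set of all formulas satisfied by
every assignment in `H` satisfying all formulas of `T`. -/
def logicalRadical (L : FirstOrder.Language) (H : Type*) [L.Structure H] {n : ℕ}
    (T : Set (L.Formula (Fin n))) : Set (L.Formula (Fin n)) :=
  {φ | ∀ v : Fin n → H, (∀ ψ ∈ T, ψ.Realize v) → φ.Realize v}

lemma exists_tuple_of_radical_eq {L : FirstOrder.Language} {H₁ H₂ : Type*}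
    [L.Structure H₁] [L.Structure H₂] {n : ℕ} (a : Fin n → H₁)
    (h : logicalRadical L H₁ (typeOfTuple L a) = logicalRadical L H₂ (typeOfTuple L a)) :
    ∃ b : Fin n → H₂, typeOfTuple L a = typeOfTuple L b := by
  by_cases hne : ∃ b : Fin n → H₂, ∀ ψ ∈ typeOfTuple L a, ψ.Realize b
  · obtain ⟨b, hb⟩ := hne
    refine ⟨b, Set.Subset.antisymm (fun φ hφ => hb φ hφ) ?_⟩
    intro φ hφ
    by_contra hc
    have : (φ.not) ∈ typeOfTuple L a := by
      simpa [typeOfTuple, Formula.realize_not] using hc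
    have := hb _ this
    rw [Formula.realize_not] at this
    exact this hφ
  · exfalso
    push_neg at hne
    have hbot : (⊥ : L.Formula (Fin n)) ∈ logicalRadical L H₂ (typeOfTuple L a) := by
      intro v hv
      obtain ⟨ψ, hψ, hψ'⟩ := hne v
      exact absurd (hv ψ hψ) hψ'
    rw [← h] at hbot
    have := hbot a (fun ψ hψ => hψ)
    simp at this

/-- **Logical equivalence coincides with isotypicity.**  Two `L`-structures `H₁` and `H₂`
are logically equivalent (all logical radicals with respect to `H₁` and `H₂` coincide)
if and only if they are isotypic. -/
theorem logicallyEquivalent_iff_isotypic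
    (L : FirstOrder.Language) (H₁ H₂ : Type*) [L.Structure H₁] [L.Structure H₂] :
    (∀ (n : ℕ) (T : Set (L.Formula (Fin n))),
        logicalRadical L H₁ T = logicalRadical L H₂ T) ↔ Isotypic L H₁ H₂ := by
  constructor
  · intro h n
    constructor
    · intro a
      exact exists_tuple_of_radical_eq a (h n _)
    · intro b
      obtain ⟨a, ha⟩ := exists_tuple_of_radical_eq b (h n (typeOfTuple L b)).symm
      exact ⟨a, ha.symm⟩
  · intro h n T
    ext φ
    constructor
    · intro hφ v hv
      obtain ⟨a, ha⟩ := (h n).2 v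
      have hva : ∀ ψ ∈ T, Formula.Realize ψ a := fun ψ hψ => by
        have : ψ ∈ typeOfTuple L v := hv ψ hψ
        rwa [← ha] at this
      have : φ ∈ typeOfTuple L a := hφ a hva
      rwa [ha] at this
    · intro hφ v hv
      obtain ⟨b, hb⟩ := (h n).1 v
      have hvb : ∀ ψ ∈ T, Formula.Realize ψ b := fun ψ hψ => by
        have : ψ ∈ typeOfTuple L v := hv ψ hψ
        rwa [hb] at this
      have : φ ∈ typeOfTuple L b := hφ b hvb
      rwa [← hb] at this
end

section
/- Let G be a finitely generated co-Hopfian group, i.e., every injective group endomorphism of G is surjective. Then G is isotypically rigid in the class of all groups: every group H that is isotypic to G is isomorphic to G. -/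
open FirstOrder Language

/-- The type of a tuple `a : Fin n → G` in a group `G`: the set of all first-order
formulas in the language of groups, in free variables `x₁, …, xₙ`, satisfied by `a`. -/
def groupTypeOfTuple (G : Type*) [Group G] {n : ℕ} (a : Fin n → G) :
    Set (grpLang.Formula (Fin n)) :=
  letI := grpStructure G
  {φ | φ.Realize a}

/-- Two groups are isotypic if every tuple in either of them has a tuple in the other
realizing exactly the same type in the first-order language of groups. -/
def GroupIsotypic (G H : Type*) [Group G] [Group H] : Prop :=
  ∀ n : ℕ,
    (∀ a : Fin n → G, ∃ b : Fin n → H, groupTypeOfTuple G a = groupTypeOfTuple H b) ∧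
    (∀ b : Fin n → H, ∃ a : Fin n → G, groupTypeOfTuple G a = groupTypeOfTuple H b)

attribute [local instance] grpStructure

namespace IsotypicAux

variable {G : Type*} [Group G] {H : Type*} [Group H]

/-- Multiplication term. -/
def mulT {α : Type*} (t₁ t₂ : grpLang.Term α) : grpLang.Term α :=
  Term.func (l := 2) () ![t₁, t₂]

/-- Inversion term. -/
def invT {α : Type*} (t : grpLang.Term α) : grpLang.Term α :=
  Term.func (l := 1) () ![t]

/-- Identity term. -/
def oneT {α : Type*} : grpLang.Term α :=
  Term.func (l := 0) () ![]

@[simp] lemma realize_mulT {α : Type*} (v : α → G) (t₁ t₂ : grpLang.Term α) :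
    (mulT t₁ t₂).realize v = t₁.realize v * t₂.realize v := rfl

@[simp] lemma realize_invT {α : Type*} (v : α → G) (t : grpLang.Term α) :
    (invT t).realize v = (t.realize v)⁻¹ := rfl

@[simp] lemma realize_oneT {α : Type*} (v : α → G) :
    (oneT : grpLang.Term α).realize v = 1 := rfl

/-- Every element of the subgroup generated by a tuple is the value of a term. -/
lemma exists_term {n : ℕ} (a : Fin n → G) (ha : Subgroup.closure (Set.range a) = ⊤)
    (g : G) : ∃ t : grpLang.Term (Fin n), t.realize a = g := by
  have hg : g ∈ Subgroup.closure (Set.range a) := ha ▸ Subgroup.mem_top g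
  induction hg using Subgroup.closure_induction with
  | mem x hx =>
      obtain ⟨i, rfl⟩ := hx
      exact ⟨Term.var i, rfl⟩
  | one => exact ⟨oneT, realize_oneT a⟩
  | mul x y hx hy ihx ihy =>
      obtain ⟨t₁, ht₁⟩ := ihx
      obtain ⟨t₂, ht₂⟩ := ihy
      exact ⟨mulT t₁ t₂, by simp [ht₁, ht₂]⟩
  | inv x hx ih =>
      obtain ⟨t, ht⟩ := ih
      exact ⟨invT t, by simp [ht]⟩

/-- Equal types transfer equalities between term values. -/
lemma term_eq_transfer {n : ℕ} {a : Fin n → G} {b : Fin n → H}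
    (h : groupTypeOfTuple G a = groupTypeOfTuple H b)
    (t₁ t₂ : grpLang.Term (Fin n)) :
    t₁.realize a = t₂.realize a ↔ t₁.realize b = t₂.realize b := by
  have := Set.ext_iff.mp h (t₁.equal t₂)
  simpa only [groupTypeOfTuple, Set.mem_setOf_eq, Formula.realize_equal] using this

/-- Given a generating tuple of `G` and a tuple of `H` with the same type, there is an
injective homomorphism `G →* H` sending term values at `a` to term values at `b`. -/
lemma exists_hom {n : ℕ} (a : Fin n → G) (ha : Subgroup.closure (Set.range a) = ⊤)
    (b : Fin n → H) (h : groupTypeOfTuple G a = groupTypeOfTuple H b) :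
    ∃ f : G →* H, Function.Injective f ∧
      ∀ t : grpLang.Term (Fin n), f (t.realize a) = t.realize b := by
  choose T hT using exists_term a ha
  have key : ∀ (g : G) (t : grpLang.Term (Fin n)), t.realize a = g →
      (T g).realize b = t.realize b := fun g t ht =>
    (term_eq_transfer h (T g) t).mp (by rw [hT, ht])
  refine ⟨MonoidHom.mk' (fun g => (T g).realize b) ?_, ?_, ?_⟩
  · intro x y
    have h1 : (mulT (T x) (T y)).realize a = x * y := by simp [hT]
    simpa using key (x * y) (mulT (T x) (T y)) h1
  · intro x y hxy
    have := (term_eq_transfer h (T x) (T y)).mpr hxy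
    rwa [hT, hT] at this
  · intro t
    exact key (t.realize a) t rfl

end IsotypicAux

open IsotypicAux in

/-- **Isotypic rigidity of finitely generated co-Hopfian groups.**  If `G` is a finitely
generated group all of whose injective endomorphisms are surjective, then every group
isotypic to `G` is isomorphic to `G`. -/
theorem coHopfian_isotypic_rigidity
    (G : Type*) [Group G] [Group.FG G]
    (hco : ∀ f : G →* G, Function.Injective f → Function.Surjective f)
    (H : Type*) [Group H] (h : GroupIsotypic G H) :
    Nonempty (G ≃* H) := by
  classical
  obtain ⟨S, hS⟩ : ∃ S : Finset G, Subgroup.closure (S : Set G) = ⊤ := Group.FG.out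
  set n := S.card with hn
  let e : Fin n ≃ S := S.equivFin.symm
  let a : Fin n → G := fun i => (e i : G)
  have hra : Set.range a = (S : Set G) := by
    ext x
    simp only [Set.mem_range, Finset.mem_coe]
    constructor
    · rintro ⟨i, rfl⟩; exact (e i).2
    · intro hx; exact ⟨e.symm ⟨x, hx⟩, by simp [a]⟩
  have ha : Subgroup.closure (Set.range a) = ⊤ := by rw [hra]; exact hS
  obtain ⟨b, hab⟩ := (h n).1 a
  obtain ⟨φ, φinj, φterm⟩ := exists_hom a ha b hab
  refine ⟨MulEquiv.ofBijective φ ⟨φinj, ?_⟩⟩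
  intro h0
  -- pull back the extended tuple
  set b' : Fin (n + 1) → H := Fin.snoc b h0 with hb'
  obtain ⟨a', ha'⟩ := (h (n + 1)).2 b'
  set a₀ : Fin n → G := a' ∘ Fin.castSucc with ha₀
  have hbcast : b' ∘ Fin.castSucc = b := funext fun i => by simp [hb']
  -- a₀ has the same type as b (hence as a)
  have hrestr : groupTypeOfTuple G a₀ = groupTypeOfTuple H b := by
    ext φ'
    have h1 := Set.ext_iff.mp ha' (Formula.relabel Fin.castSucc φ')
    simp only [groupTypeOfTuple, Set.mem_setOf_eq, Formula.realize_relabel, hbcast] at h1 ⊢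
    exact h1
  have haa₀ : groupTypeOfTuple G a = groupTypeOfTuple G a₀ := hab.trans hrestr.symm
  -- co-Hopfian step: a₀ also generates G
  obtain ⟨f, finj, fterm⟩ := exists_hom a ha a₀ haa₀
  have fsurj := hco f finj
  have hterm₀ : ∀ g : G, ∃ t : grpLang.Term (Fin n), t.realize a₀ = g := by
    intro g
    obtain ⟨g'', hg''⟩ := fsurj g
    obtain ⟨t, ht⟩ := exists_term a ha g''
    exact ⟨t, by rw [← hg'', ← ht, fterm]⟩
  -- express the last coordinate of a' as a term in a₀, and transfer to b'
  obtain ⟨t, ht⟩ := hterm₀ (a' (Fin.last n))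
  have htr := term_eq_transfer ha' (t.relabel Fin.castSucc) (Term.var (Fin.last n))
  simp only [Term.realize_relabel, Term.realize_var] at htr
  have h2 : t.realize (b' ∘ Fin.castSucc) = b' (Fin.last n) := htr.mp (by rw [← ha₀]; exact ht)
  rw [hbcast] at h2
  have hlast : b' (Fin.last n) = h0 := by simp [hb']
  rw [hlast] at h2
  exact ⟨t.realize a, by rw [φterm, h2]⟩
end

section
/- Let G be a finitely presented Hopfian group, i.e., G admits a presentation with finitely many generators and finitely many relations, and every surjective group endomorphism of G is injective. Then G is isotypically rigid in the class of all groups: every group H that is isotypic to G is isomorphic to G. -/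
open FirstOrder Language

attribute [local instance] grpStructure

namespace IsoAux

variable {β : Type*}

def gOne : grpLang.Term β := @Term.func grpLang β 0 () ![]
def gInv (t : grpLang.Term β) : grpLang.Term β := @Term.func grpLang β 1 () ![t]
def gMul (t₁ t₂ : grpLang.Term β) : grpLang.Term β := @Term.func grpLang β 2 () ![t₁, t₂]

variable {G : Type*} [Group G]

@[simp] theorem funMap0 (f : grpLang.Functions 0) (v : Fin 0 → G) :
    Structure.funMap f v = 1 := rfl
@[simp] theorem funMap1 (f : grpLang.Functions 1) (v : Fin 1 → G) :
    Structure.funMap f v = (v 0)⁻¹ := rfl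
@[simp] theorem funMap2 (f : grpLang.Functions 2) (v : Fin 2 → G) :
    Structure.funMap f v = v 0 * v 1 := rfl

@[simp] theorem realize_gOne (v : β → G) : (gOne (β := β)).realize v = 1 := rfl
@[simp] theorem realize_gInv (v : β → G) (t : grpLang.Term β) :
    (gInv t).realize v = (t.realize v)⁻¹ := rfl
@[simp] theorem realize_gMul (v : β → G) (t₁ t₂ : grpLang.Term β) :
    (gMul t₁ t₂).realize v = t₁.realize v * t₂.realize v := rfl

def listTerm : List (β × Bool) → grpLang.Term β
  | [] => gOne
  | p :: l => gMul (cond p.2 (Term.var p.1) (gInv (Term.var p.1))) (listTerm l)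

theorem realize_listTerm (v : β → G) : ∀ L : List (β × Bool),
    (listTerm L).realize v = (L.map fun p => cond p.2 (v p.1) (v p.1)⁻¹).prod
  | [] => by simp [listTerm]
  | p :: l => by
      obtain ⟨i, b⟩ := p
      cases b <;> simp [listTerm, realize_listTerm v l]

def wordTerm {n : ℕ} (w : FreeGroup (Fin n)) (f : Fin n → β) : grpLang.Term β :=
  listTerm (w.toWord.map fun p => (f p.1, p.2))

theorem lift_eq_prod {α : Type*} [DecidableEq α] (g : α → G) (w : FreeGroup α) :
    FreeGroup.lift g w = (w.toWord.map fun p => cond p.2 (g p.1) (g p.1)⁻¹).prod := by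
  conv_lhs => rw [← FreeGroup.mk_toWord (x := w)]
  rw [FreeGroup.lift_eq_prod_map, FreeGroup.map.mk, FreeGroup.prod_mk, List.map_map]
  rfl

theorem realize_wordTerm {n : ℕ} (v : β → G) (w : FreeGroup (Fin n)) (f : Fin n → β) :
    (wordTerm w f).realize v = FreeGroup.lift (fun i => v (f i)) w := by
  rw [wordTerm, realize_listTerm, lift_eq_prod, List.map_map]
  rfl

end IsoAux


namespace IsoAux

variable {G : Type*} [Group G]

noncomputable def relF {n : ℕ} (rels : Finset (FreeGroup (Fin n))) : grpLang.Formula (Fin n) :=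
  BoundedFormula.iInf fun r : rels => Term.bdEqual (wordTerm (r : FreeGroup (Fin n)) Sum.inl) gOne

theorem realize_relF {n : ℕ} (rels : Finset (FreeGroup (Fin n))) (x : Fin n → G) :
    (relF rels).Realize x ↔ ∀ r ∈ rels, FreeGroup.lift x r = 1 := by
  simp [relF, Formula.Realize, realize_wordTerm]

def eqOneF {n : ℕ} (w : FreeGroup (Fin n)) : grpLang.Formula (Fin n) :=
  Term.equal (wordTerm w id) gOne

theorem realize_eqOneF {n : ℕ} (w : FreeGroup (Fin n)) (x : Fin n → G) :
    (eqOneF w).Realize x ↔ FreeGroup.lift x w = 1 := by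
  simp [eqOneF, Formula.realize_equal, realize_wordTerm]

noncomputable def muF {n : ℕ} (rels : Finset (FreeGroup (Fin n))) (vw : Fin n → FreeGroup (Fin n)) :
    grpLang.Formula (Fin n) :=
  (BoundedFormula.iInf (fun r : rels => Term.bdEqual (wordTerm (r : FreeGroup (Fin n)) Sum.inr) gOne) ⊓
    BoundedFormula.iInf
      (fun i : Fin n => Term.bdEqual (Term.var (Sum.inl i)) (wordTerm (vw i) Sum.inr))).exs

theorem realize_muF {n : ℕ} (rels : Finset (FreeGroup (Fin n)))
    (vw : Fin n → FreeGroup (Fin n)) (x : Fin n → G) :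
    (muF rels vw).Realize x ↔
      ∃ y : Fin n → G, (∀ r ∈ rels, FreeGroup.lift y r = 1) ∧
        ∀ i, x i = FreeGroup.lift y (vw i) := by
  simp [muF, BoundedFormula.realize_exs, realize_wordTerm, Term.realize]

def wEqF {n : ℕ} (w : FreeGroup (Fin n)) : grpLang.Formula (Fin (n + 1)) :=
  Term.equal (Term.var (Fin.last n)) (wordTerm w Fin.castSucc)

theorem realize_wEqF {n : ℕ} (w : FreeGroup (Fin n)) (x : Fin (n + 1) → G) :
    (wEqF w).Realize x ↔ x (Fin.last n) = FreeGroup.lift (fun i => x i.castSucc) w := by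
  simp [wEqF, Formula.realize_equal, realize_wordTerm, Term.realize]

end IsoAux


namespace IsoAux

theorem type_iff {G H : Type*} [Group G] [Group H] {n : ℕ} {a : Fin n → G} {b : Fin n → H}
    (h : groupTypeOfTuple G a = groupTypeOfTuple H b) (φ : grpLang.Formula (Fin n)) :
    φ.Realize a ↔ φ.Realize b :=
  Set.ext_iff.mp h φ

theorem type_iff_restrict {G H : Type*} [Group G] [Group H] {n : ℕ}
    {a : Fin (n + 1) → G} {b : Fin (n + 1) → H}
    (h : groupTypeOfTuple G a = groupTypeOfTuple H b) (φ : grpLang.Formula (Fin n)) :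
    φ.Realize (fun i => a i.castSucc) ↔ φ.Realize (fun i => b i.castSucc) := by
  have := type_iff h (φ.relabel Fin.castSucc)
  simpa [Formula.realize_relabel, Function.comp_def] using this

theorem presented_exists_hom {G : Type*} [Group G] {n : ℕ} {rels : Finset (FreeGroup (Fin n))}
    (e : G ≃* PresentedGroup (rels : Set (FreeGroup (Fin n))))
    {K : Type*} [Group K] (c : Fin n → K) (hc : ∀ r ∈ rels, FreeGroup.lift c r = 1) :
    ∃ ψ : G →* K, ∀ w : FreeGroup (Fin n),
      ψ (FreeGroup.lift (fun i => e.symm (PresentedGroup.of i)) w) = FreeGroup.lift c w := by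
  have hc' : ∀ r ∈ (rels : Set (FreeGroup (Fin n))), FreeGroup.lift c r = 1 := by
    simpa using hc
  refine ⟨(PresentedGroup.toGroup hc').comp e.toMonoidHom, fun w => ?_⟩
  have : ((PresentedGroup.toGroup hc').comp e.toMonoidHom).comp
      (FreeGroup.lift fun i => e.symm (PresentedGroup.of i)) = FreeGroup.lift c := by
    ext i
    simp [PresentedGroup.toGroup.of]
  exact DFunLike.congr_fun this w

end IsoAux

open IsoAux in
set_option maxHeartbeats 1000000 in
/-- **Isotypic rigidity of finitely presented Hopfian groups.**  If `G` is a finitely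
presented group all of whose surjective endomorphisms are injective, then every group
isotypic to `G` is isomorphic to `G`. -/
theorem finitelyPresented_hopfian_isotypic_rigidity
    (G : Type*) [Group G]
    (hfp : ∃ (n : ℕ) (rels : Finset (FreeGroup (Fin n))),
      Nonempty (G ≃* PresentedGroup (rels : Set (FreeGroup (Fin n)))))
    (hhopf : ∀ f : G →* G, Function.Surjective f → Function.Injective f)
    (H : Type*) [Group H] (h : GroupIsotypic G H) :
    Nonempty (G ≃* H) := by
  obtain ⟨n, rels, ⟨e⟩⟩ := hfp
  obtain ⟨a, ha⟩ : ∃ a : Fin n → G, a = fun i => e.symm (PresentedGroup.of i) := ⟨_, rfl⟩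
  have hlift : FreeGroup.lift a = MonoidHom.comp e.symm.toMonoidHom (PresentedGroup.mk (rels : Set (FreeGroup (Fin n)))) := by
    rw [ha]
    ext i
    simp [PresentedGroup.of]
  have hsurj : Function.Surjective (FreeGroup.lift a) := by
    rw [hlift]
    exact e.symm.surjective.comp (PresentedGroup.mk_surjective _)
  have hclos : Subgroup.closure (Set.range a) = ⊤ := by
    rw [← FreeGroup.range_lift_eq_closure]
    exact MonoidHom.range_eq_top.2 hsurj
  have hrels_a : ∀ r ∈ rels, FreeGroup.lift a r = 1 := by
    intro r hr
    rw [hlift]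
    have h1 : PresentedGroup.mk (rels : Set (FreeGroup (Fin n))) r = 1 :=
      (QuotientGroup.eq_one_iff r).2 (Subgroup.subset_normalClosure hr)
    simp [h1]
  -- choose b
  obtain ⟨b, hb⟩ := (h n).1 a
  have hrels_b : ∀ r ∈ rels, FreeGroup.lift b r = 1 := by
    have := (type_iff hb (relF rels))
    rw [realize_relF, realize_relF] at this
    exact this.1 hrels_a
  obtain ⟨φ, hφ⟩ := presented_exists_hom e b hrels_b
  rw [← ha] at hφ
  have hinj : Function.Injective φ := by
    rw [injective_iff_map_eq_one]
    intro g hg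
    obtain ⟨w, rfl⟩ := hsurj g
    rw [hφ] at hg
    have := (type_iff hb (eqOneF w))
    rw [realize_eqOneF, realize_eqOneF] at this
    exact this.2 hg
  have hsurjφ : Function.Surjective φ := by
    intro h0
    obtain ⟨ag, hag⟩ := (h (n + 1)).2 ((Fin.snoc b h0 : Fin (n + 1) → H))
    set a2 : Fin n → G := fun i => ag i.castSucc with ha2
    have hb2 : (fun i : Fin n => (Fin.snoc b h0 : Fin (n + 1) → H) i.castSucc) = b := by
      funext i; simp
    have htr : ∀ ψ : grpLang.Formula (Fin n), ψ.Realize a2 ↔ ψ.Realize b := by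
      intro ψ
      have := type_iff_restrict hag ψ
      rwa [hb2] at this
    -- words expressing a2 in a
    choose vw hvw using fun i => hsurj (a2 i)
    -- mu realized by a2
    have hmu2 : (muF rels vw).Realize a2 := by
      rw [realize_muF]
      exact ⟨a, hrels_a, fun i => (hvw i).symm⟩
    -- transfer along a2 ~ b ~ a
    have hmua : (muF rels vw).Realize a := by
      have h1 := (htr (muF rels vw)).1 hmu2
      exact (type_iff hb (muF rels vw)).2 h1
    rw [realize_muF] at hmua
    obtain ⟨a3, ha3rels, ha3eq⟩ := hmua
    obtain ⟨θ, hθ⟩ := presented_exists_hom e a3 ha3rels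
    rw [← ha] at hθ
    have hθa : ∀ i, θ (a i) = a3 i := by
      intro i
      have : a i = FreeGroup.lift a (FreeGroup.of i) := by simp
      rw [this, hθ, FreeGroup.lift_apply_of]
    have hθsurj : Function.Surjective θ := by
      rw [← MonoidHom.range_eq_top, eq_top_iff, ← hclos, Subgroup.closure_le]
      rintro _ ⟨i, rfl⟩
      exact ⟨FreeGroup.lift a (vw i), by rw [hθ, ← ha3eq i]⟩
    have hθinj := hhopf θ hθsurj
    have hθa2 : ∀ i, θ (a2 i) = a i := by
      intro i
      rw [← hvw i, hθ, ← ha3eq i]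
    have hcomp : θ.comp (FreeGroup.lift a2) = FreeGroup.lift a := by
      ext i
      simp [hθa2]
    have hsurj2 : Function.Surjective (FreeGroup.lift a2) := by
      intro g
      obtain ⟨w, hw⟩ := hsurj (θ g)
      refine ⟨w, hθinj ?_⟩
      rw [← hw]
      exact DFunLike.congr_fun hcomp w
    obtain ⟨w, hw⟩ := hsurj2 (ag (Fin.last n))
    -- transfer the word equation
    have hwa : (wEqF w).Realize ag := by
      rw [realize_wEqF]
      exact hw.symm
    have hwb := (type_iff hag (wEqF w)).1 hwa
    rw [realize_wEqF, Fin.snoc_last, hb2] at hwb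
    exact ⟨FreeGroup.lift a w, by rw [hφ, ← hwb]⟩
  exact ⟨MulEquiv.ofBijective φ ⟨hinj, hsurjφ⟩⟩
end

section
/- For every natural number n, the free abelian group ℤ^n is isotypically rigid: every group H that is isotypic to ℤ^n is isomorphic to ℤ^n. -/
open FirstOrder Language

/-! ### Auxiliary syntax: terms in the language of groups -/

namespace GrpAux

open Matrix

variable {α : Type*}

/-- Multiplication term. -/
def tmul (t s : grpLang.Term α) : grpLang.Term α := Term.func (l := 2) () ![t, s]
/-- Inversion term. -/
def tinv (t : grpLang.Term α) : grpLang.Term α := Term.func (l := 1) () ![t]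
/-- Identity term. -/
def tone : grpLang.Term α := Term.func (l := 0) () ![]

/-- Natural power term. -/
def tnpow (t : grpLang.Term α) : ℕ → grpLang.Term α
  | 0 => tone
  | (k+1) => tmul (tnpow t k) t

/-- Integer power term. -/
def tzpow (t : grpLang.Term α) (m : ℤ) : grpLang.Term α :=
  if 0 ≤ m then tnpow t m.toNat else tinv (tnpow t (-m).toNat)

/-- Product of a list of terms. -/
def tprod : List (grpLang.Term α) → grpLang.Term α
  | [] => tone
  | (t :: ts) => tmul t (tprod ts)

section
attribute [local instance] grpStructure
variable {G : Type*} [Group G] (v : α → G)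

@[simp] lemma realize_tmul (t s : grpLang.Term α) :
    (tmul t s).realize v = t.realize v * s.realize v := rfl

@[simp] lemma realize_tinv (t : grpLang.Term α) :
    (tinv t).realize v = (t.realize v)⁻¹ := rfl

@[simp] lemma realize_tone : (tone : grpLang.Term α).realize v = 1 := rfl

@[simp] lemma realize_tnpow (t : grpLang.Term α) (k : ℕ) :
    (tnpow t k).realize v = (t.realize v) ^ k := by
  induction k with
  | zero => simp [tnpow]
  | succ k ih => simp [tnpow, ih, pow_succ]

@[simp] lemma realize_tzpow (t : grpLang.Term α) (m : ℤ) :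
    (tzpow t m).realize v = (t.realize v) ^ m := by
  unfold tzpow
  split
  · rename_i hm
    simp [← zpow_natCast, Int.toNat_of_nonneg hm]
  · rename_i hm
    rw [realize_tinv, realize_tnpow, ← zpow_natCast, Int.toNat_of_nonneg (by omega),
      ← _root_.zpow_neg, neg_neg]

@[simp] lemma realize_tprod (ts : List (grpLang.Term α)) :
    (tprod ts).realize v = (ts.map (Term.realize v)).prod := by
  induction ts with
  | nil => simp [tprod]
  | cons t ts ih => simp [tprod, ih]

end

variable {n : ℕ}

/-- The term `∏ i, (u i) ^ (m i)`. -/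
def wordTerm (u : Fin n → grpLang.Term α) (m : Fin n → ℤ) : grpLang.Term α :=
  tprod (List.ofFn fun i => tzpow (u i) (m i))

section
attribute [local instance] grpStructure
variable {G : Type*} [CommGroup G]

@[simp] lemma realize_wordTerm (v : α → G) (u : Fin n → grpLang.Term α) (m : Fin n → ℤ) :
    (wordTerm u m).realize v = ∏ i, ((u i).realize v) ^ (m i) := by
  simp [wordTerm, List.map_ofFn, List.prod_ofFn, Function.comp_def]

end

/-! ### The key first-order formulas -/

/-- The formula `∏ xᵢ^(mᵢ) = 1`. -/
def relFormula (m : Fin n → ℤ) : grpLang.Formula (Fin n) :=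
  Term.equal (wordTerm Term.var m) tone

/-- The formula `x_n = ∏_{i<n} xᵢ^(mᵢ)`. -/
def lastWordFormula (m : Fin n → ℤ) : grpLang.Formula (Fin (n+1)) :=
  Term.equal (Term.var (Fin.last n)) (wordTerm (fun i => Term.var i.castSucc) m)

/-- The formula `∀ x, ⋁_{m : Fin n → Fin k} ∃ y, x = ∏ xᵢ^(mᵢ) * y^k`. -/
noncomputable def spanFormula (k : ℕ) : grpLang.Formula (Fin n) :=
  BoundedFormula.all (BoundedFormula.iSup fun (m : Fin n → Fin k) =>
    BoundedFormula.ex (Term.bdEqual (Term.var (Sum.inr 0))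
      (tmul (wordTerm (fun i => Term.var (Sum.inl i)) (fun i => (m i : ℤ)))
        (tnpow (Term.var (Sum.inr 1)) k))))

/-- The sentence (with redundant free variables) `∀ x y, x * y = y * x`. -/
def commFormula : grpLang.Formula (Fin n) :=
  BoundedFormula.all (BoundedFormula.all (Term.bdEqual
    (tmul (Term.var (Sum.inr 0)) (Term.var (Sum.inr 1)))
    (tmul (Term.var (Sum.inr 1)) (Term.var (Sum.inr 0)))))

section
attribute [local instance] grpStructure

@[simp] lemma realize_commFormula {G : Type*} [Group G] (v : Fin n → G) :
    (commFormula (n := n)).Realize v ↔ ∀ x y : G, x * y = y * x := by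
  rw [commFormula, Formula.Realize, BoundedFormula.realize_all]
  refine forall_congr' fun x => ?_
  rw [BoundedFormula.realize_all]
  refine forall_congr' fun y => ?_
  rw [BoundedFormula.realize_bdEqual]
  simp [Fin.snoc]

variable {G : Type*} [CommGroup G] (v : Fin n → G)

@[simp] lemma realize_relFormula (m : Fin n → ℤ) :
    (relFormula m).Realize v ↔ ∏ i, (v i) ^ (m i) = 1 := by
  simp [relFormula, Formula.realize_equal]

@[simp] lemma realize_lastWordFormula (m : Fin n → ℤ) (w : Fin (n+1) → G) :
    (lastWordFormula m).Realize w ↔ w (Fin.last n) = ∏ i, (w i.castSucc) ^ (m i) := by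
  simp [lastWordFormula, Formula.realize_equal]

@[simp] lemma realize_spanFormula (k : ℕ) :
    (spanFormula k).Realize v ↔
      ∀ x : G, ∃ m : Fin n → Fin k, ∃ y : G, x = (∏ i, (v i) ^ ((m i : ℤ))) * y ^ k := by
  rw [spanFormula, Formula.Realize, BoundedFormula.realize_all]
  refine forall_congr' fun x => ?_
  rw [BoundedFormula.realize_iSup]
  refine exists_congr fun m => ?_
  rw [BoundedFormula.realize_ex]
  refine exists_congr fun y => ?_
  rw [BoundedFormula.realize_bdEqual]
  simp [Fin.snoc]

end

/-! ### Computations in `ℤⁿ` -/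

/-- The standard basis of `Fin n → Multiplicative ℤ`. -/
def eb : Fin n → (Fin n → Multiplicative ℤ) :=
  fun i j => Multiplicative.ofAdd (if j = i then 1 else 0)

lemma prodPow_apply (b : Fin n → (Fin n → Multiplicative ℤ)) (m : Fin n → ℤ) (j : Fin n) :
    (∏ i, b i ^ m i) j = Multiplicative.ofAdd (∑ i, m i * ((b i j).toAdd)) := by
  rw [Finset.prod_apply, ofAdd_sum]
  refine Finset.prod_congr rfl fun i _ => ?_
  rw [Pi.pow_apply, ← ofAdd_toAdd (b i j ^ m i), toAdd_zpow, smul_eq_mul]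

lemma prodPow_eb (m : Fin n → ℤ) :
    (∏ i, eb i ^ m i) = fun j => Multiplicative.ofAdd (m j) := by
  funext j
  rw [prodPow_apply]
  congr 1
  simp only [eb, toAdd_ofAdd, mul_ite, mul_one, mul_zero]
  simp

lemma eb_indep (m : Fin n → ℤ) (hm : ∏ i, eb i ^ m i = 1) : m = 0 := by
  rw [prodPow_eb] at hm
  funext j
  have := congrFun hm j
  simpa using this

lemma eb_span (d : ℕ) (hd : 0 < d) (x : Fin n → Multiplicative ℤ) :
    ∃ m : Fin n → Fin d, ∃ y : Fin n → Multiplicative ℤ,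
      x = (∏ i, (eb i) ^ ((m i : ℤ))) * y ^ d := by
  have hd' : (d : ℤ) ≠ 0 := by exact_mod_cast hd.ne'
  refine ⟨fun j => ⟨((x j).toAdd % d).toNat, ?_⟩,
    fun j => Multiplicative.ofAdd ((x j).toAdd / d), ?_⟩
  · have h1 : 0 ≤ (x j).toAdd % d := Int.emod_nonneg _ hd'
    have h2 : (x j).toAdd % d < d := Int.emod_lt_of_pos _ (by exact_mod_cast hd)
    omega
  · funext j
    rw [Pi.mul_apply, prodPow_eb]
    have h1 : 0 ≤ (x j).toAdd % d := Int.emod_nonneg _ hd'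
    have : ((((x j).toAdd % d).toNat : ℤ)) = (x j).toAdd % d := Int.toNat_of_nonneg h1
    apply Multiplicative.toAdd.injective
    rw [toAdd_mul, Pi.pow_apply, toAdd_pow,
      toAdd_ofAdd, toAdd_ofAdd]
    push_cast [this]
    rw [nsmul_eq_mul]
    have h3 := Int.emod_add_mul_ediv (x j).toAdd d
    omega

lemma vecMul_smul_one (c : ℤ) (v : Fin n → ℤ) :
    v ᵥ* (c • (1 : Matrix (Fin n) (Fin n) ℤ)) = c • v := by
  funext j
  simp [Matrix.vecMul, dotProduct, Matrix.one_apply, mul_ite,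
    Finset.sum_ite_eq, mul_comm]

lemma prodPow_eq_vecMul (b : Fin n → (Fin n → Multiplicative ℤ)) (m : Fin n → ℤ) :
    (∏ i, b i ^ m i)
      = fun j => Multiplicative.ofAdd ((m ᵥ* (Matrix.of fun i j => (b i j).toAdd)) j) := by
  funext j
  rw [prodPow_apply]
  congr 1

/-- The key linear-algebra step: if the tuple `b` is independent, then there is `d > 0`
such that any element expressible as a word in `b` times a `d`-th power is a word in `b`. -/
lemma exists_d (b : Fin n → (Fin n → Multiplicative ℤ))
    (hind : ∀ m : Fin n → ℤ, ∏ i, b i ^ m i = 1 → m = 0) :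
    ∃ d : ℕ, 0 < d ∧ ∀ (x y : Fin n → Multiplicative ℤ) (mr : Fin n → Fin d),
      x = (∏ i, b i ^ ((mr i : ℤ))) * y ^ d → ∃ m : Fin n → ℤ, x = ∏ i, b i ^ m i := by
  set M : Matrix (Fin n) (Fin n) ℤ := Matrix.of fun i j => (b i j).toAdd with hM
  have hdet : M.det ≠ 0 := by
    intro h0
    obtain ⟨v, hv, hvM⟩ := Matrix.exists_vecMul_eq_zero_iff.mpr h0
    apply hv
    apply hind
    rw [prodPow_eq_vecMul, hvM]
    rfl
  refine ⟨M.det.natAbs, Int.natAbs_pos.mpr hdet, ?_⟩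
  intro x y mr hx
  set ε : ℤ := if 0 ≤ M.det then 1 else -1 with hε
  have hεd : ε * M.det = (M.det.natAbs : ℤ) := by
    have habs : ((M.det.natAbs : ℤ)) = |M.det| := Int.abs_eq_natAbs M.det ▸ rfl
    rcases le_or_gt 0 M.det with hle | hlt
    · rw [hε, if_pos hle, one_mul, habs, abs_of_nonneg hle]
    · rw [hε, if_neg (not_le.mpr hlt), habs, abs_of_neg hlt]
      ring
  refine ⟨(fun i => ((mr i : ℤ))) + ε • ((fun j => (y j).toAdd) ᵥ* M.adjugate), ?_⟩
  rw [prodPow_eq_vecMul, ← hM]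
  funext j
  have hxj := congrFun hx j
  rw [Pi.mul_apply, prodPow_eq_vecMul, ← hM] at hxj
  apply Multiplicative.toAdd.injective
  rw [hxj, toAdd_mul, toAdd_ofAdd, Pi.pow_apply, toAdd_pow, toAdd_ofAdd]
  rw [Matrix.add_vecMul, Matrix.smul_vecMul, Matrix.vecMul_vecMul, Matrix.adjugate_mul,
    vecMul_smul_one]
  simp only [Pi.add_apply, Pi.smul_apply, smul_eq_mul, nsmul_eq_mul]
  rw [← hεd]
  ring

/-! ### The main argument -/

/-- Main auxiliary lemma, assuming commutativity of `H`. -/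
lemma main_aux (n : ℕ) (H : Type*) [CommGroup H]
    (h : GroupIsotypic H (Fin n → Multiplicative ℤ)) :
    Nonempty (H ≃* (Fin n → Multiplicative ℤ)) := by
  classical
  obtain ⟨a, ha⟩ := (h n).2 eb
  have key : ∀ φ : grpLang.Formula (Fin n),
      (letI := grpStructure H; φ.Realize a) ↔
      (letI := grpStructure (Fin n → Multiplicative ℤ); φ.Realize eb) :=
    fun φ => Iff.symm (Set.ext_iff.mp ha.symm φ)
  -- independence of `a`
  have hind_a : ∀ m : Fin n → ℤ, ∏ i, a i ^ m i = 1 → m = 0 := by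
    intro m hm
    exact eb_indep m ((realize_relFormula eb m).mp
      ((key (relFormula m)).mp ((realize_relFormula a m).mpr hm)))
  -- the homomorphism
  have fmul : ∀ x y : Fin n → Multiplicative ℤ,
      (∏ i, a i ^ ((x * y) i).toAdd) = (∏ i, a i ^ (x i).toAdd) * ∏ i, a i ^ (y i).toAdd := by
    intro x y
    rw [← Finset.prod_mul_distrib]
    refine Finset.prod_congr rfl fun i _ => ?_
    rw [Pi.mul_apply, toAdd_mul, _root_.zpow_add]
  let f : (Fin n → Multiplicative ℤ) →* H :=
    MonoidHom.mk' (fun x => ∏ i, a i ^ (x i).toAdd) fmul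
  have hinj : Function.Injective f := by
    rw [injective_iff_map_eq_one]
    intro x hx
    have : (fun i => (x i).toAdd) = 0 := hind_a _ hx
    funext j
    have := congrFun this j
    apply Multiplicative.toAdd.injective
    simpa using this
  have hsurj : Function.Surjective f := by
    intro hh
    obtain ⟨cG, hc⟩ := (h (n+1)).1 (Fin.snoc a hh)
    have key2 : ∀ φ : grpLang.Formula (Fin (n+1)),
        (letI := grpStructure H; φ.Realize (Fin.snoc a hh)) ↔
        (letI := grpStructure (Fin n → Multiplicative ℤ); φ.Realize cG) :=
      fun φ => Set.ext_iff.mp hc φ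
    set b : Fin n → (Fin n → Multiplicative ℤ) := fun i => cG i.castSucc with hb
    have keyb : ∀ φ : grpLang.Formula (Fin n),
        (letI := grpStructure (Fin n → Multiplicative ℤ); φ.Realize b) ↔
        (letI := grpStructure (Fin n → Multiplicative ℤ); φ.Realize eb) := by
      intro φ
      letI := grpStructure H
      letI := grpStructure (Fin n → Multiplicative ℤ)
      have e1 : (φ.relabel Fin.castSucc).Realize cG ↔ φ.Realize b :=
        Formula.realize_relabel
      have e2 : (φ.relabel Fin.castSucc).Realize (Fin.snoc a hh : Fin (n+1) → H)
          ↔ φ.Realize a := by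
        rw [Formula.realize_relabel]
        have : ((Fin.snoc a hh : Fin (n+1) → H) ∘ Fin.castSucc) = a := by
          funext i; simp
        rw [this]
      exact (e1.symm.trans ((key2 _).symm.trans (e2.trans (key φ))))
    -- independence of `b`
    have hind_b : ∀ m : Fin n → ℤ, ∏ i, b i ^ m i = 1 → m = 0 := by
      intro m hm
      exact eb_indep m ((realize_relFormula eb m).mp
        ((keyb (relFormula m)).mp ((realize_relFormula b m).mpr hm)))
    obtain ⟨d, hd, hrepr⟩ := exists_d b hind_b
    -- `b` spans
    have hspan : ∀ x : Fin n → Multiplicative ℤ, ∃ mr : Fin n → Fin d,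
        ∃ y, x = (∏ i, b i ^ ((mr i : ℤ))) * y ^ d :=
      (realize_spanFormula b d).mp ((keyb (spanFormula d)).mpr
        ((realize_spanFormula eb d).mpr (eb_span d hd)))
    obtain ⟨mr, y, hy⟩ := hspan (cG (Fin.last n))
    obtain ⟨m, hmw⟩ := hrepr _ y mr hy
    refine ⟨fun i => Multiplicative.ofAdd (m i), ?_⟩
    have hlast : (letI := grpStructure H;
        (lastWordFormula m).Realize (Fin.snoc a hh : Fin (n+1) → H)) :=
      (key2 (lastWordFormula m)).mpr ((realize_lastWordFormula m cG).mpr hmw)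
    have := (realize_lastWordFormula m (Fin.snoc a hh)).mp hlast
    simp only [Fin.snoc_last, Fin.snoc_castSucc] at this
    rw [this]
    rfl
  exact ⟨(MulEquiv.ofBijective f ⟨hinj, hsurj⟩).symm⟩

end GrpAux

/-- **Isotypic rigidity of finitely generated free abelian groups.**  Every group
isotypic to `ℤ^n` (the direct product of `n` copies of the integers, written
multiplicatively) is isomorphic to `ℤ^n`. -/
theorem freeAbelian_isotypic_rigidity
    (n : ℕ) (H : Type*) [Group H]
    (h : GroupIsotypic H (Fin n → Multiplicative ℤ)) :
    Nonempty (H ≃* (Fin n → Multiplicative ℤ)) := by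
  classical
  -- first extract commutativity of `H`
  obtain ⟨a, ha⟩ := (h n).2 GrpAux.eb
  have key : ∀ φ : grpLang.Formula (Fin n),
      (letI := grpStructure H; φ.Realize a) ↔
      (letI := grpStructure (Fin n → Multiplicative ℤ); φ.Realize GrpAux.eb) :=
    fun φ => Set.ext_iff.mp ha φ
  have hcomm : ∀ x y : H, x * y = y * x := by
    letI := grpStructure H
    exact (GrpAux.realize_commFormula a).mp ((key GrpAux.commFormula).mpr
      ((GrpAux.realize_commFormula GrpAux.eb).mpr fun x y => mul_comm x y))
  letI : CommGroup H := { (inferInstance : Group H) with mul_comm := hcomm }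
  exact GrpAux.main_aux n H h
end
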